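/- Let d ≥ 1 and γ > 0. Let μ be the product measure on ((Fin d) → ℝ) × ℝ given by: the first factor is the product of d independent Gaussian measures on ℝ with mean 0 and variance 2γ, and the second factor is the uniform probability measure on the interval [0, 2π]. Then for all x, y ∈ EuclideanSpace ℝ (Fin d), ∫ 2 · cos(∑_i w_i x_i + b) · cos(∑_i w_i y_i + b) dμ(w, b) = exp(-γ ‖x - y‖²). -/

import Mathlib

open MeasureTheory ProbabilityTheory
open scoped NNReal ENNReal

section Aux

open Real Complex

lemma rff_aux_L1 (v : ℝ≥0) (hv : v ≠ 0) (t : ℝ) :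
    ∫ x : ℝ, Complex.exp (t * x * Complex.I) ∂gaussianReal 0 v
      = (Real.exp (-(v : ℝ) * t ^ 2 / 2) : ℂ) := by
  have hv' : (0 : ℝ) < v := lt_of_le_of_ne v.coe_nonneg (by exact_mod_cast hv.symm)
  rw [gaussianReal_of_var_ne_zero _ hv]
  have hpdf : gaussianPDF 0 v = fun x => ((gaussianPDFReal 0 v x).toNNReal : ℝ≥0∞) := rfl
  rw [hpdf, integral_withDensity_eq_integral_smul
    ((measurable_gaussianPDFReal 0 v).real_toNNReal) _]
  have hb : ((-(2 * (v : ℝ))⁻¹ : ℂ)).re < 0 := by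
    rw [show ((-(2 * (v : ℝ))⁻¹ : ℂ)) = ((-(2 * (v : ℝ))⁻¹ : ℝ) : ℂ) by push_cast; ring]
    rw [Complex.ofReal_re]
    simp only [neg_neg, Left.neg_neg_iff]
    positivity
  have hpt : ∀ x : ℝ, ((gaussianPDFReal 0 v x).toNNReal : ℝ≥0) • Complex.exp (t * x * Complex.I)
      = ((Real.sqrt (2 * π * v) : ℝ) : ℂ)⁻¹ *
        Complex.exp ((-(2 * (v : ℝ))⁻¹ : ℂ) * x ^ 2 + (t * Complex.I) * x + 0) := by
    intro x
    rw [NNReal.smul_def, Real.coe_toNNReal _ (gaussianPDFReal_nonneg 0 v x),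
      Complex.real_smul, gaussianPDFReal]
    simp only [sub_zero]
    push_cast [Complex.ofReal_exp]
    rw [mul_assoc, ← Complex.exp_add]
    congr 2
    have hvne : ((v : ℝ) : ℂ) ≠ 0 := by exact_mod_cast hv'.ne'
    field_simp
    ring
  simp_rw [hpt]
  rw [integral_const_mul, integral_cexp_quadratic hb (t * Complex.I) 0]
  have h1 : ((π : ℂ) / -(-(2 * (v : ℝ))⁻¹ : ℂ)) = ((2 * π * v : ℝ) : ℂ) := by
    have hvne : ((v : ℝ) : ℂ) ≠ 0 := by exact_mod_cast hv'.ne'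
    push_cast
    field_simp
  have h2 : ((2 * π * v : ℝ) : ℂ) ^ (1 / 2 : ℂ) = ((Real.sqrt (2 * π * v) : ℝ) : ℂ) := by
    rw [show (1 / 2 : ℂ) = ((1 / 2 : ℝ) : ℂ) by norm_num,
      ← Complex.ofReal_cpow (by positivity), Real.sqrt_eq_rpow]
  have h3 : (0 : ℂ) - (t * Complex.I) ^ 2 / (4 * (-(2 * (v : ℝ))⁻¹ : ℂ))
      = ((-(v : ℝ) * t ^ 2 / 2 : ℝ) : ℂ) := by
    have hvne : ((v : ℝ) : ℂ) ≠ 0 := by exact_mod_cast hv'.ne'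
    rw [mul_pow, Complex.I_sq]
    push_cast
    field_simp
    ring
  rw [h1, h2, h3, ← Complex.ofReal_exp, ← mul_assoc]
  rw [inv_mul_cancel₀, one_mul]
  exact_mod_cast (Real.sqrt_pos.mpr (by positivity)).ne'

lemma rff_aux_L2 {ι : Type*} [Fintype ι] (m : Measure ℝ) [SigmaFinite m] (f : ι → ℝ → ℂ) :
    ∫ w : ι → ℝ, ∏ i, f i (w i) ∂(Measure.pi fun _ : ι => m) = ∏ i, ∫ x, f i x ∂m := by
  letI : MeasureSpace ℝ := ⟨m⟩
  exact MeasureTheory.integral_fintype_prod_eq_prod f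

lemma rff_aux_L3 {d : ℕ} (v : ℝ≥0) (hv : v ≠ 0) (z : Fin d → ℝ) :
    ∫ w : Fin d → ℝ, Real.cos (∑ i, w i * z i) ∂(Measure.pi fun _ : Fin d => gaussianReal 0 v)
      = Real.exp (-(v : ℝ) / 2 * ∑ i, z i ^ 2) := by
  have key : ∫ w : Fin d → ℝ, Complex.exp ((∑ i, w i * z i : ℝ) * Complex.I)
        ∂(Measure.pi fun _ : Fin d => gaussianReal 0 v)
      = ((Real.exp (-(v : ℝ) / 2 * ∑ i, z i ^ 2) : ℝ) : ℂ) := by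
    have hpt : ∀ w : Fin d → ℝ, Complex.exp ((∑ i, w i * z i : ℝ) * Complex.I)
        = ∏ i, Complex.exp ((z i : ℂ) * (w i : ℂ) * Complex.I) := by
      intro w
      rw [← Complex.exp_sum]
      congr 1
      push_cast
      rw [Finset.sum_mul]
      exact Finset.sum_congr rfl fun i _ => by ring
    simp_rw [hpt]
    rw [rff_aux_L2 (gaussianReal 0 v) (fun i u => Complex.exp ((z i : ℂ) * (u : ℂ) * Complex.I))]
    have : ∀ i : Fin d, ∫ u : ℝ, Complex.exp ((z i : ℂ) * (u : ℂ) * Complex.I) ∂gaussianReal 0 v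
        = ((Real.exp (-(v : ℝ) * z i ^ 2 / 2) : ℝ) : ℂ) := fun i => rff_aux_L1 v hv (z i)
    simp_rw [this, ← Complex.ofReal_prod, ← Real.exp_sum]
    congr 2
    rw [Finset.mul_sum]
    congr 1 with i
    ring
  haveI : IsProbabilityMeasure (gaussianReal (0 : ℝ) v) := inferInstance
  have hInt : Integrable (fun w : Fin d → ℝ => Complex.exp ((∑ i, w i * z i : ℝ) * Complex.I))
      (Measure.pi fun _ : Fin d => gaussianReal 0 v) := by
    have hc : Continuous fun w : Fin d → ℝ =>
        Complex.exp ((∑ i, w i * z i : ℝ) * Complex.I) := by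
      apply Complex.continuous_exp.comp
      apply Continuous.mul _ continuous_const
      apply Complex.continuous_ofReal.comp
      exact continuous_finset_sum _ fun i _ => (continuous_apply i).mul continuous_const
    refine (integrable_const (1 : ℝ)).mono' hc.aestronglyMeasurable (ae_of_all _ fun w => ?_)
    rw [Complex.norm_exp_ofReal_mul_I]
  have := integral_re hInt
  rw [key] at this
  simp only [RCLike.re_to_complex, Complex.exp_ofReal_mul_I_re] at this
  rw [this, Complex.ofReal_re]

lemma rff_aux_L4 (A C : ℝ) :
    ∫ b : ℝ, 2 * Real.cos (A + b) * Real.cos (C + b)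
        ∂((ENNReal.ofReal (2 * π))⁻¹ • volume.restrict (Set.Icc (0 : ℝ) (2 * π)))
      = Real.cos (A - C) := by
  have h2pi : (0 : ℝ) < 2 * π := by positivity
  rw [integral_smul_measure]
  rw [ENNReal.toReal_inv, ENNReal.toReal_ofReal h2pi.le]
  rw [MeasureTheory.integral_Icc_eq_integral_Ioc,
    ← intervalIntegral.integral_of_le h2pi.le]
  have hpt : ∀ b : ℝ, 2 * Real.cos (A + b) * Real.cos (C + b)
      = Real.cos (A - C) + Real.cos (2 * b + (A + C)) := by
    intro b
    have h := Real.cos_add_cos (A + C + 2 * b) (A - C)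
    have h1 : (A + C + 2 * b + (A - C)) / 2 = A + b := by ring
    have h2 : (A + C + 2 * b - (A - C)) / 2 = C + b := by ring
    rw [h1, h2] at h
    rw [show (2 * b + (A + C)) = A + C + 2 * b by ring]
    linarith
  simp_rw [hpt]
  rw [intervalIntegral.integral_add (by apply Continuous.intervalIntegrable; continuity)
    (by apply Continuous.intervalIntegrable; continuity)]
  rw [intervalIntegral.integral_const]
  rw [intervalIntegral.integral_comp_mul_add Real.cos two_ne_zero (A + C)]
  rw [integral_cos]
  have : Real.sin (2 * (2 * π) + (A + C)) = Real.sin (2 * 0 + (A + C)) := by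
    rw [show 2 * (2 * π) + (A + C) = (A + C + 2 * π) + 2 * π by ring,
      Real.sin_add_two_pi, Real.sin_add_two_pi]
    ring_nf
  rw [this]
  simp only [sub_self, smul_eq_mul, mul_zero, add_zero, sub_zero]
  field_simp

end Aux

/-- Unbiasedness of the random Fourier feature approximation of the Gaussian kernel:
for `w` with independent `N(0, 2γ)` coordinates and `b` uniform on `[0, 2π]`, the
expectation of `2 cos(wᵀx + b) cos(wᵀy + b)` equals `exp (-γ ‖x - y‖²)`. -/
theorem rff_unbiased_gaussian_kernel {d : ℕ} (hd : 1 ≤ d) (γ : NNReal) (hγ : 0 < γ)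
    (μ : Measure (((Fin d) → ℝ) × ℝ))
    (hμ : μ = (Measure.pi fun _ : Fin d => gaussianReal 0 (2 * γ)).prod
      ((ENNReal.ofReal (2 * Real.pi))⁻¹ • volume.restrict (Set.Icc (0 : ℝ) (2 * Real.pi))))
    (x y : EuclideanSpace ℝ (Fin d)) :
    ∫ p, 2 * Real.cos (∑ i, p.1 i * x i + p.2) * Real.cos (∑ i, p.1 i * y i + p.2) ∂μ
      = Real.exp (-(γ : ℝ) * ‖x - y‖ ^ 2) := by
  subst hμ
  set ν : Measure ℝ :=
    (ENNReal.ofReal (2 * Real.pi))⁻¹ • volume.restrict (Set.Icc (0 : ℝ) (2 * Real.pi)) with hν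
  have h2pi : (0 : ℝ) < 2 * Real.pi := by positivity
  haveI : IsProbabilityMeasure ν := by
    constructor
    rw [hν, Measure.smul_apply, Measure.restrict_apply_univ, Real.volume_Icc, smul_eq_mul]
    rw [show (2 * Real.pi - 0 : ℝ) = 2 * Real.pi by ring]
    rw [ENNReal.inv_mul_cancel (by simp [h2pi, Real.pi_pos]) ENNReal.ofReal_ne_top]
  have hInt : Integrable
      (fun p : ((Fin d) → ℝ) × ℝ =>
        2 * Real.cos (∑ i, p.1 i * x i + p.2) * Real.cos (∑ i, p.1 i * y i + p.2))
      ((Measure.pi fun _ : Fin d => gaussianReal 0 (2 * γ)).prod ν) := by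
    have hc : Continuous (fun p : ((Fin d) → ℝ) × ℝ =>
        2 * Real.cos (∑ i, p.1 i * x i + p.2) * Real.cos (∑ i, p.1 i * y i + p.2)) := by
      have hs : ∀ u : EuclideanSpace ℝ (Fin d), Continuous
          (fun p : ((Fin d) → ℝ) × ℝ => ∑ i, p.1 i * u i + p.2) := fun u =>
        ((continuous_finset_sum _ fun i _ =>
          ((continuous_apply i).comp continuous_fst).mul continuous_const).add continuous_snd)
      exact ((continuous_const.mul (Real.continuous_cos.comp (hs x))).mul
        (Real.continuous_cos.comp (hs y)))
    refine (integrable_const (2 : ℝ)).mono' hc.aestronglyMeasurable (ae_of_all _ fun p => ?_)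
    rw [Real.norm_eq_abs, abs_mul, abs_mul, abs_two]
    calc 2 * |Real.cos (∑ i, p.1 i * x i + p.2)| * |Real.cos (∑ i, p.1 i * y i + p.2)|
        ≤ 2 * 1 * 1 := by
          gcongr
          · exact Real.abs_cos_le_one _
          · exact Real.abs_cos_le_one _
      _ = 2 := by norm_num
  rw [MeasureTheory.integral_prod _ hInt]
  have hinner : ∀ w : Fin d → ℝ,
      (∫ b, 2 * Real.cos (∑ i, w i * x i + b) * Real.cos (∑ i, w i * y i + b) ∂ν)
        = Real.cos (∑ i, w i * (x i - y i)) := by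
    intro w
    rw [hν, rff_aux_L4 (∑ i, w i * x i) (∑ i, w i * y i)]
    congr 1
    rw [← Finset.sum_sub_distrib]
    congr 1 with i
    ring
  simp_rw [hinner]
  have hv : (2 * γ : ℝ≥0) ≠ 0 := by
    simp only [ne_eq, mul_eq_zero, not_or]
    exact ⟨two_ne_zero, hγ.ne'⟩
  rw [rff_aux_L3 (2 * γ) hv (fun i => x i - y i)]
  congr 1
  have hnorm : ‖x - y‖ ^ 2 = ∑ i, (x i - y i) ^ 2 := by
    rw [EuclideanSpace.norm_eq, Real.sq_sqrt (Finset.sum_nonneg fun i _ => sq_nonneg _)]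
    congr 1 with i
    rw [Real.norm_eq_abs, sq_abs, PiLp.sub_apply]
  rw [hnorm]
  push_cast
  ring
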